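/- Let T be a tournament with exactly p acyclic components, of which exactly k are infinite. Then φ_T(n) ≥ p_k(n−p) for every n ≥ p. In particular the growth of φ_T is at least that of a polynomial of degree k−1. -/

import Mathlib

universe u v

/-- `r` is a tournament relation on `V`: irreflexive and, for distinct vertices,
exactly one of the two directed edges is present. -/
def IsTournament {V : Type u} (r : V → V → Prop) : Prop :=
  (∀ x, ¬ r x x) ∧ ∀ x y : V, x ≠ y → (r x y ↔ ¬ r y x)

/-- A subset `A` is autonomous in the tournament `r`. -/
def Autonomous {V : Type u} (r : V → V → Prop) (A : Set V) : Prop :=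
  ∀ x ∈ A, ∀ x' ∈ A, ∀ y ∉ A, (r x y ↔ r x' y)

/-- A subset `A` is acyclic: it contains no 3-cycle. -/
def AcyclicSet {V : Type u} (r : V → V → Prop) (A : Set V) : Prop :=
  ¬ ∃ a ∈ A, ∃ b ∈ A, ∃ c ∈ A, r a b ∧ r b c ∧ r c a

/-- The acyclic component of a vertex `x`: the union of all acyclic autonomous
subsets containing `x`. -/
def acyclicComponent {V : Type u} (r : V → V → Prop) (x : V) : Set V :=
  ⋃₀ {A : Set V | x ∈ A ∧ Autonomous r A ∧ AcyclicSet r A}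

/-- `A` is an acyclic component of the tournament `r`. -/
def IsAcyclicComponent {V : Type u} (r : V → V → Prop) (A : Set V) : Prop :=
  ∃ x, A = acyclicComponent r x

/-- A tournament is acyclically indecomposable if every acyclic autonomous subset
has at most one element. -/
def AcyclicallyIndecomposable {V : Type u} (r : V → V → Prop) : Prop :=
  ∀ A : Set V, Autonomous r A → AcyclicSet r A → A.Subsingleton

/-- The type of acyclic components of `r`. -/
def AcComp {V : Type u} (r : V → V → Prop) : Type u :=
  {A : Set V // IsAcyclicComponent r A}

/-- The quotient tournament `Ť` on the set of acyclic components. -/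
def quotRel {V : Type u} (r : V → V → Prop) : AcComp r → AcComp r → Prop :=
  fun A B => A ≠ B ∧ ∃ x ∈ A.val, ∃ y ∈ B.val, r x y

/-- The lexicographical sum of the tournaments `rels i` indexed by the tournament `d`. -/
def lexSumRel {I : Type u} {F : I → Type v} (d : I → I → Prop)
    (rels : ∀ i, F i → F i → Prop) : (Σ i, F i) → (Σ i, F i) → Prop :=
  fun p q => (p.1 ≠ q.1 ∧ d p.1 q.1) ∨
    ∃ h : p.1 = q.1, rels q.1 (cast (congrArg F h) p.2) q.2

/-- The subtournaments induced on the finite sets `s` and `t` are isomorphic. -/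
def InducedIso {V : Type u} (r : V → V → Prop) (s t : Finset V) : Prop :=
  ∃ e : {x // x ∈ s} ≃ {x // x ∈ t},
    ∀ a b : {x // x ∈ s}, r a.val b.val ↔ r (e a).val (e b).val

/-- The profile of a tournament: the number of isomorphism classes of subtournaments
induced on `n`-element subsets of the vertex set. -/
noncomputable def profile {V : Type u} (r : V → V → Prop) (n : ℕ) : ℕ :=
  Nat.card (Quot (fun s t : {w : Finset V // w.card = n} => InducedIso r s.val t.val))

/-- `r` is (isomorphic to) a lexicographical sum of acyclic tournaments indexed by a
finite tournament. -/
def IsFiniteLexSumOfAcyclic {V : Type u} (r : V → V → Prop) : Prop :=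
  ∃ (I : Type) (d : I → I → Prop) (F : I → Type u)
    (rels : ∀ i, F i → F i → Prop),
    Finite I ∧ IsTournament d ∧
    (∀ i, IsTournament (rels i) ∧ AcyclicSet (rels i) Set.univ) ∧
    ∃ e : V ≃ (Σ i, F i), ∀ x y, r x y ↔ lexSumRel d rels (e x) (e y)

/-- A bundled tournament (vertex type together with its edge relation). -/
structure Tour : Type 1 where
  V : Type
  rel : V → V → Prop

/-- `S` is embeddable in the tournament `r`: `S` is isomorphic to a subtournament of `r`. -/
def Tour.EmbedsIn {W : Type u} (S : Tour) (r : W → W → Prop) : Prop :=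
  ∃ f : S.V → W, Function.Injective f ∧ ∀ x y, S.rel x y ↔ r (f x) (f y)

/-- The profile of a bundled tournament. -/
noncomputable def Tour.profile (T : Tour) (n : ℕ) : ℕ := _root_.profile T.rel n

/-- The quotient tournament `Ť` of a bundled tournament, on its acyclic components. -/
def Tour.check (T : Tour) : Tour := ⟨AcComp T.rel, quotRel T.rel⟩

/-- The tournament `C3[C]` for an acyclic tournament `C = (A, lt)`. -/
def c3Rel {A : Type} (lt : A → A → Prop) : A × Fin 3 → A × Fin 3 → Prop :=
  fun p q => lt p.1 q.1 ∨ (p.1 = q.1 ∧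
    ((p.2 = 0 ∧ q.2 = 1) ∨ (p.2 = 1 ∧ q.2 = 2) ∨ (p.2 = 2 ∧ q.2 = 0)))

/-- The tournament `V[C]` for an acyclic tournament `C = (A, lt)`; `none` is the extra vertex. -/
def vRel {A : Type} (lt : A → A → Prop) (p q : Option (A × Fin 2)) : Prop :=
  match p, q with
  | some p, some q => lt p.1 q.1 ∨ (p.1 = q.1 ∧ p.2 = 0 ∧ q.2 = 1)
  | none, some q => q.2 = 0
  | some p, none => p.2 = 1
  | none, none => False

/-- The tournament `T[C]` for an acyclic tournament `C = (A, lt)`. -/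
def tRel {A : Type} (lt : A → A → Prop) : A × Fin 2 → A × Fin 2 → Prop :=
  fun p q =>
    (p.2 = 0 ∧ q.2 = 0 ∧ lt p.1 q.1) ∨
    (p.1 = q.1 ∧ p.2 = 0 ∧ q.2 = 1) ∨
    (p.2 = 1 ∧ q.2 = 1 ∧ lt p.1 q.1) ∨
    (p.2 = 1 ∧ q.2 = 0 ∧ lt q.1 p.1) ∨
    (p.2 = 0 ∧ q.2 = 1 ∧ lt q.1 p.1)

/-- The tournament `U[C]` for an acyclic tournament `C = (A, lt)`. -/
def uRel {A : Type} (lt : A → A → Prop) : A × Fin 2 → A × Fin 2 → Prop :=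
  fun p q =>
    (p.2 = 0 ∧ q.2 = 0 ∧ lt p.1 q.1) ∨
    (p.1 = q.1 ∧ p.2 = 0 ∧ q.2 = 1) ∨
    (p.2 = 1 ∧ q.2 = 1 ∧ lt q.1 p.1) ∨
    (p.2 = 0 ∧ q.2 = 1 ∧ lt p.1 q.1) ∨
    (p.2 = 1 ∧ q.2 = 0 ∧ lt p.1 q.1)

/-- The tournament `H[C]` for an acyclic tournament `C = (A, lt)`. -/
def hRel {A : Type} (lt : A → A → Prop) : A × Fin 2 → A × Fin 2 → Prop :=
  fun p q =>
    (p.2 = 0 ∧ q.2 = 0 ∧ lt p.1 q.1) ∨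
    (p.1 = q.1 ∧ p.2 = 0 ∧ q.2 = 1) ∨
    (p.2 = 1 ∧ q.2 = 1 ∧ lt p.1 q.1) ∨
    (p.2 = 1 ∧ q.2 = 0 ∧ lt q.1 p.1) ∨
    (p.2 = 1 ∧ q.2 = 0 ∧ lt p.1 q.1)

/-- The tournament `K[C]` for an acyclic tournament `C = (A, lt)`. -/
def kRel {A : Type} (lt : A → A → Prop) : A × Fin 2 → A × Fin 2 → Prop :=
  fun p q =>
    (p.2 = 0 ∧ q.2 = 0 ∧ lt p.1 q.1) ∨
    (p.1 = q.1 ∧ p.2 = 0 ∧ q.2 = 1) ∨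
    (p.2 = 1 ∧ q.2 = 1 ∧ lt q.1 p.1) ∨
    (p.2 = 1 ∧ q.2 = 0 ∧ lt q.1 p.1) ∨
    (p.2 = 1 ∧ q.2 = 0 ∧ lt p.1 q.1)

def c3Tour (A : Type) (lt : A → A → Prop) : Tour := ⟨A × Fin 3, c3Rel lt⟩
def vTour (A : Type) (lt : A → A → Prop) : Tour := ⟨Option (A × Fin 2), vRel lt⟩
def tTour (A : Type) (lt : A → A → Prop) : Tour := ⟨A × Fin 2, tRel lt⟩
def uTour (A : Type) (lt : A → A → Prop) : Tour := ⟨A × Fin 2, uRel lt⟩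
def hTour (A : Type) (lt : A → A → Prop) : Tour := ⟨A × Fin 2, hRel lt⟩
def kTour (A : Type) (lt : A → A → Prop) : Tour := ⟨A × Fin 2, kRel lt⟩

/-- The order type `ω`: the natural numbers with the usual strict order. -/
def omegaLT : ℕ → ℕ → Prop := fun m n => m < n

/-- The order type `ω*`: the natural numbers with the reversed strict order. -/
def omegaStarLT : ℕ → ℕ → Prop := fun m n => n < m

/-- The set `𝔅` of twelve tournaments. -/
def frakB : List Tour :=
  [c3Tour ℕ omegaLT, vTour ℕ omegaLT, tTour ℕ omegaLT,
   uTour ℕ omegaLT, hTour ℕ omegaLT, kTour ℕ omegaLT,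
   c3Tour ℕ omegaStarLT, vTour ℕ omegaStarLT, tTour ℕ omegaStarLT,
   uTour ℕ omegaStarLT, hTour ℕ omegaStarLT, kTour ℕ omegaStarLT]

/-- The set `𝔅_{n̲}` of six tournaments built on the acyclic tournament `({0,…,n−1},<)`. -/
def frakBn (n : ℕ) : List Tour :=
  [c3Tour (Fin n) (· < ·), vTour (Fin n) (· < ·), tTour (Fin n) (· < ·),
   uTour (Fin n) (· < ·), hTour (Fin n) (· < ·), kTour (Fin n) (· < ·)]

namespace Aux

variable {V : Type u} {r : V → V → Prop}

section Basic

/-- cycle elements are pairwise distinct -/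
lemma cyc_ne (hT : IsTournament r) {a b c : V} (h1 : r a b) (h2 : r b c) (h3 : r c a) :
    a ≠ b ∧ b ≠ c ∧ a ≠ c := by
  refine ⟨?_, ?_, ?_⟩ <;> rintro rfl
  · exact hT.1 a h1
  · exact hT.1 b h2
  · exact hT.1 a h3

/-- two cycle points in an autonomous set, one out: impossible -/
lemma two_in_one_out (hT : IsTournament r) {A : Set V} (hA : Autonomous r A) {a b c : V}
    (ha : a ∈ A) (hb : b ∈ A) (hc : c ∉ A)
    (h1 : r a b) (h2 : r b c) (h3 : r c a) : False := by
  obtain ⟨-, -, hac⟩ := cyc_ne hT h1 h2 h3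
  have h4 : r a c := (hA a ha b hb c hc).mpr h2
  exact ((hT.2 a c hac).mp h4) h3

lemma singleton_autonomous (x : V) : Autonomous r {x} := by
  rintro a rfl b rfl y _; rfl

lemma singleton_acyclic (hT : IsTournament r) (x : V) : AcyclicSet r {x} := by
  rintro ⟨a, rfl, b, rfl, c, rfl, h1, -, -⟩
  exact hT.1 _ h1

lemma acyclic_mono {A B : Set V} (h : A ⊆ B) (hB : AcyclicSet r B) : AcyclicSet r A := by
  rintro ⟨a, ha, b, hb, c, hc, h1, h2, h3⟩
  exact hB ⟨a, h ha, b, h hb, c, h hc, h1, h2, h3⟩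

lemma union_autonomous {A B : Set V} (hA : Autonomous r A) (hB : Autonomous r B)
    {x : V} (hxA : x ∈ A) (hxB : x ∈ B) : Autonomous r (A ∪ B) := by
  have key : ∀ u ∈ A ∪ B, ∀ y ∉ A ∪ B, (r u y ↔ r x y) := by
    rintro u (hu | hu) y hy
    · exact hA u hu x hxA y (fun h => hy (Or.inl h))
    · exact hB u hu x hxB y (fun h => hy (Or.inr h))
  intro u hu u' hu' y hy
  rw [key u hu y hy, key u' hu' y hy]

lemma union_acyclic (hT : IsTournament r) {A B : Set V}
    (hA : Autonomous r A) (hB : Autonomous r B)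
    (hAc : AcyclicSet r A) (hBc : AcyclicSet r B) : AcyclicSet r (A ∪ B) := by
  rintro ⟨a, ha, b, hb, c, hc, h1, h2, h3⟩
  -- rotations of the cycle
  have HA1 := fun ha hb hc => two_in_one_out hT hA (a := a) (b := b) (c := c) ha hb hc h1 h2 h3
  have HA2 := fun hb hc ha => two_in_one_out hT hA (a := b) (b := c) (c := a) hb hc ha h2 h3 h1
  have HA3 := fun hc ha hb => two_in_one_out hT hA (a := c) (b := a) (c := b) hc ha hb h3 h1 h2
  have HB1 := fun ha hb hc => two_in_one_out hT hB (a := a) (b := b) (c := c) ha hb hc h1 h2 h3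
  have HB2 := fun hb hc ha => two_in_one_out hT hB (a := b) (b := c) (c := a) hb hc ha h2 h3 h1
  have HB3 := fun hc ha hb => two_in_one_out hT hB (a := c) (b := a) (c := b) hc ha hb h3 h1 h2
  have hAall : ∀ _ : a ∈ A, ∀ _ : b ∈ A, ∀ _ : c ∈ A, False := fun x1 x2 x3 =>
    hAc ⟨a, x1, b, x2, c, x3, h1, h2, h3⟩
  have hBall : ∀ _ : a ∈ B, ∀ _ : b ∈ B, ∀ _ : c ∈ B, False := fun x1 x2 x3 =>
    hBc ⟨a, x1, b, x2, c, x3, h1, h2, h3⟩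
  by_cases haA : a ∈ A <;> by_cases hbA : b ∈ A <;> by_cases hcA : c ∈ A
  · exact hAall haA hbA hcA
  · exact HA1 haA hbA hcA
  · exact HA3 hcA haA hbA
  · have hbB : b ∈ B := hb.resolve_left hbA
    have hcB : c ∈ B := hc.resolve_left hcA
    by_cases haB : a ∈ B
    · exact hBall haB hbB hcB
    · exact HB2 hbB hcB haB
  · exact HA2 hbA hcA haA
  · have haB : a ∈ B := ha.resolve_left haA
    have hcB : c ∈ B := hc.resolve_left hcA
    by_cases hbB : b ∈ B
    · exact hBall haB hbB hcB
    · exact HB3 hcB haB hbB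
  · have haB : a ∈ B := ha.resolve_left haA
    have hbB : b ∈ B := hb.resolve_left hbA
    by_cases hcB : c ∈ B
    · exact hBall haB hbB hcB
    · exact HB1 haB hbB hcB
  · exact hBall (ha.resolve_left haA) (hb.resolve_left hbA) (hc.resolve_left hcA)

lemma mem_comp_self (hT : IsTournament r) (x : V) : x ∈ acyclicComponent r x :=
  ⟨{x}, ⟨rfl, singleton_autonomous x, singleton_acyclic hT x⟩, rfl⟩

lemma comp_autonomous (x : V) : Autonomous r (acyclicComponent r x) := by
  intro u hu u' hu' y hy
  obtain ⟨A, ⟨hxA, hAaut, hAc⟩, huA⟩ := hu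
  obtain ⟨A', ⟨hxA', hA'aut, hA'c⟩, huA'⟩ := hu'
  have h1 : (r u y ↔ r x y) := hAaut u huA x hxA y (fun h => hy ⟨A, ⟨hxA, hAaut, hAc⟩, h⟩)
  have h2 : (r u' y ↔ r x y) := hA'aut u' huA' x hxA' y (fun h => hy ⟨A', ⟨hxA', hA'aut, hA'c⟩, h⟩)
  rw [h1, h2]

lemma comp_acyclic (hT : IsTournament r) (x : V) : AcyclicSet r (acyclicComponent r x) := by
  rintro ⟨a, ⟨A, ⟨hxA, hAa, hAc⟩, haA⟩, b, ⟨B, ⟨hxB, hBa, hBc⟩, hbB⟩,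
    c, ⟨C, ⟨hxC, hCa, hCc⟩, hcC⟩, h1, h2, h3⟩
  have hABa := union_autonomous hBa hCa hxB hxC
  have hABc := union_acyclic hT hBa hCa hBc hCc
  have h2' := union_autonomous hAa hABa hxA (Or.inl hxB)
  have h2c := union_acyclic hT hAa hABa hAc hABc
  exact h2c ⟨a, Or.inl haA, b, Or.inr (Or.inl hbB), c, Or.inr (Or.inr hcC), h1, h2, h3⟩

lemma subset_comp {A : Set V} {x : V} (hx : x ∈ A) (hAa : Autonomous r A)
    (hAc : AcyclicSet r A) : A ⊆ acyclicComponent r x :=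
  fun y hy => ⟨A, ⟨hx, hAa, hAc⟩, hy⟩

lemma comp_eq_of_mem (hT : IsTournament r) {x y : V} (h : y ∈ acyclicComponent r x) :
    acyclicComponent r y = acyclicComponent r x := by
  have h1 : acyclicComponent r x ⊆ acyclicComponent r y :=
    subset_comp h (comp_autonomous x) (comp_acyclic hT x)
  have h2 : acyclicComponent r y ⊆ acyclicComponent r x :=
    subset_comp (h1 (mem_comp_self hT x)) (comp_autonomous y) (comp_acyclic hT y)
  exact le_antisymm h2 h1

lemma comp_eq_of_mem' (hT : IsTournament r) {C : Set V} (hC : IsAcyclicComponent r C)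
    {x : V} (hx : x ∈ C) : C = acyclicComponent r x := by
  obtain ⟨z, rfl⟩ := hC
  exact (comp_eq_of_mem hT hx).symm

/-- distinct components are disjoint -/
lemma comp_disjoint (hT : IsTournament r) {C C' : Set V} (hC : IsAcyclicComponent r C)
    (hC' : IsAcyclicComponent r C') {x : V} (hx : x ∈ C) (hx' : x ∈ C') : C = C' := by
  rw [comp_eq_of_mem' hT hC hx, comp_eq_of_mem' hT hC' hx']

/-- the relation between distinct components is constant -/
lemma rel_const (hT : IsTournament r) {C C' : Set V} (hC : IsAcyclicComponent r C)
    (hC' : IsAcyclicComponent r C') (hne : C ≠ C')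
    {x x' y y' : V} (hx : x ∈ C) (hx' : x' ∈ C) (hy : y ∈ C') (hy' : y' ∈ C') :
    (r x y ↔ r x' y') := by
  obtain ⟨z, rfl⟩ := hC
  obtain ⟨w, rfl⟩ := hC'
  have hyC : y ∉ acyclicComponent r z := fun h => hne (comp_disjoint hT ⟨z, rfl⟩ ⟨w, rfl⟩ h hy)
  have hy'C : y' ∉ acyclicComponent r z := fun h => hne (comp_disjoint hT ⟨z, rfl⟩ ⟨w, rfl⟩ h hy')
  have hx'C' : x' ∉ acyclicComponent r w := fun h =>
    hne (comp_disjoint hT ⟨z, rfl⟩ ⟨w, rfl⟩ hx' h)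
  have s1 : (r x y ↔ r x' y) := comp_autonomous z x hx x' hx' y hyC
  have s2 : (r x' y ↔ r x' y') := by
    have hne1 : x' ≠ y := fun h => hx'C' (h ▸ hy)
    have hne2 : x' ≠ y' := fun h => hx'C' (h ▸ hy')
    rw [hT.2 x' y hne1, hT.2 x' y' hne2]
    exact not_congr (comp_autonomous w y hy y' hy' x' hx'C')
  rw [s1, s2]

end Basic

end Aux

def AutonIn {V : Type u} (r : V → V → Prop) (S B : Set V) : Prop :=
  B ⊆ S ∧ ∀ x ∈ B, ∀ x' ∈ B, ∀ y ∈ S \ B, (r x y ↔ r x' y)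

def MaxAc {V : Type u} (r : V → V → Prop) (S B : Set V) : Prop :=
  AutonIn r S B ∧ AcyclicSet r B ∧ B.Nonempty ∧
    ∀ B', AutonIn r S B' → AcyclicSet r B' → B ⊆ B' → B = B'

namespace Aux

variable {V : Type u} {r : V → V → Prop}

lemma iscomp_autonomous {C : Set V} (hC : IsAcyclicComponent r C) : Autonomous r C := by
  obtain ⟨z, rfl⟩ := hC; exact comp_autonomous z

lemma iscomp_acyclic (hT : IsTournament r) {C : Set V} (hC : IsAcyclicComponent r C) :
    AcyclicSet r C := by
  obtain ⟨z, rfl⟩ := hC; exact comp_acyclic hT z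

lemma sub_comp (hT : IsTournament r) {S B : Set V}
    (hmeet : ∀ C, IsAcyclicComponent r C → (S ∩ C).Nonempty)
    (hBa : AutonIn r S B) (hBc : AcyclicSet r B) :
    ∀ x ∈ B, B ⊆ acyclicComponent r x := by
  set U : Set V := ⋃₀ {C | IsAcyclicComponent r C ∧ (C ∩ B).Nonempty} with hU
  have hBU : B ⊆ U := fun b hb =>
    ⟨acyclicComponent r b, ⟨⟨b, rfl⟩, ⟨b, mem_comp_self hT b, hb⟩⟩, mem_comp_self hT b⟩
  have hUa : Autonomous r U := by
    intro u hu u' hu' y hy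
    obtain ⟨C₁, ⟨hC₁, b₁, hb₁C, hb₁B⟩, huC₁⟩ := hu
    obtain ⟨C₂, ⟨hC₂, b₂, hb₂C, hb₂B⟩, huC₂⟩ := hu'
    have hyC₁ : y ∉ C₁ := fun h => hy ⟨C₁, ⟨hC₁, b₁, hb₁C, hb₁B⟩, h⟩
    have hyC₂ : y ∉ C₂ := fun h => hy ⟨C₂, ⟨hC₂, b₂, hb₂C, hb₂B⟩, h⟩
    have s1 : (r u y ↔ r b₁ y) := iscomp_autonomous hC₁ u huC₁ b₁ hb₁C y hyC₁
    have s3 : (r b₂ y ↔ r u' y) := iscomp_autonomous hC₂ b₂ hb₂C u' huC₂ y hyC₂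
    have s2 : (r b₁ y ↔ r b₂ y) := by
      by_cases hyS : y ∈ S
      · have hyB : y ∉ B := fun h => hy (hBU h)
        exact hBa.2 b₁ hb₁B b₂ hb₂B y ⟨hyS, hyB⟩
      · have hyCy : y ∈ acyclicComponent r y := mem_comp_self hT y
        have hCyB : ∀ w, w ∈ acyclicComponent r y → w ∉ B := by
          intro w hw hwB
          exact hy ⟨acyclicComponent r y, ⟨⟨y, rfl⟩, ⟨w, hw, hwB⟩⟩, hyCy⟩
        obtain ⟨s, hsS, hsCy⟩ := hmeet (acyclicComponent r y) ⟨y, rfl⟩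
        have hsB : s ∉ B := hCyB s hsCy
        have flip : ∀ b ∈ B, (r b y ↔ r b s) := by
          intro b hb
          have hbCy : b ∉ acyclicComponent r y := fun h => hCyB b h hb
          have hne1 : b ≠ y := fun h => hbCy (h ▸ hyCy)
          have hne2 : b ≠ s := fun h => hbCy (h ▸ hsCy)
          rw [hT.2 b y hne1, hT.2 b s hne2]
          exact not_congr (comp_autonomous y y hyCy s hsCy b hbCy)
        rw [flip b₁ hb₁B, flip b₂ hb₂B]
        exact hBa.2 b₁ hb₁B b₂ hb₂B s ⟨hsS, hsB⟩
    rw [s1, s2, s3]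
  have hUc : AcyclicSet r U := by
    rintro ⟨a, ⟨Ca, ⟨hCa, hCaB⟩, haCa⟩, b, ⟨Cb, ⟨hCb, hCbB⟩, hbCb⟩,
      c, ⟨Cc, ⟨hCc, hCcB⟩, hcCc⟩, h1, h2, h3⟩
    by_cases e1 : Ca = Cb
    · by_cases e2 : Cb = Cc
      · exact iscomp_acyclic hT hCa
          ⟨a, haCa, b, e1 ▸ hbCb, c, (e1.trans e2) ▸ hcCc, h1, h2, h3⟩
      · have hcCa : c ∉ Ca := fun h => e2 (comp_disjoint hT hCb hCc (e1 ▸ h) hcCc)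
        exact two_in_one_out hT (iscomp_autonomous hCa) haCa (e1 ▸ hbCb) hcCa h1 h2 h3
    · by_cases e2 : Cb = Cc
      · have haCb : a ∉ Cb := fun h => e1 (comp_disjoint hT hCa hCb haCa h)
        exact two_in_one_out hT (iscomp_autonomous hCb) hbCb (e2 ▸ hcCc) haCb h2 h3 h1
      · by_cases e3 : Ca = Cc
        · have hbCc : b ∉ Cc := fun h => e2 (comp_disjoint hT hCb hCc hbCb h)
          exact two_in_one_out hT (iscomp_autonomous hCc) hcCc (e3 ▸ haCa) hbCc h3 h1 h2
        · obtain ⟨ba, hbaC, hbaB⟩ := hCaB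
          obtain ⟨bb, hbbC, hbbB⟩ := hCbB
          obtain ⟨bc, hbcC, hbcB⟩ := hCcB
          have k1 : r ba bb := (rel_const hT hCa hCb e1 haCa hbaC hbCb hbbC).mp h1
          have k2 : r bb bc := (rel_const hT hCb hCc e2 hbCb hbbC hcCc hbcC).mp h2
          have e3' : Cc ≠ Ca := fun h => e3 h.symm
          have k3 : r bc ba := (rel_const hT hCc hCa e3' hcCc hbcC haCa hbaC).mp h3
          exact hBc ⟨ba, hbaB, bb, hbbB, bc, hbcB, k1, k2, k3⟩
  intro x hx
  exact hBU.trans (subset_comp (hBU hx) hUa hUc)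

end Aux

namespace Aux
variable {V : Type u} {r : V → V → Prop}

lemma maxAc_inter (hT : IsTournament r) {S C : Set V}
    (hmeet : ∀ C, IsAcyclicComponent r C → (S ∩ C).Nonempty)
    (hC : IsAcyclicComponent r C) : MaxAc r S (S ∩ C) := by
  have hauton : AutonIn r S (S ∩ C) := by
    refine ⟨Set.inter_subset_left, ?_⟩
    intro x hx x' hx' y hy
    have hyC : y ∉ C := fun h => hy.2 ⟨hy.1, h⟩
    exact iscomp_autonomous hC x hx.2 x' hx'.2 y hyC
  refine ⟨hauton, acyclic_mono Set.inter_subset_right (iscomp_acyclic hT hC),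
    hmeet C hC, ?_⟩
  intro B' hB'a hB'c hsub
  obtain ⟨x₀, hx₀S, hx₀C⟩ := hmeet C hC
  have hx₀B' : x₀ ∈ B' := hsub ⟨hx₀S, hx₀C⟩
  have hB'comp : B' ⊆ acyclicComponent r x₀ := sub_comp hT hmeet hB'a hB'c x₀ hx₀B'
  have hCeq : C = acyclicComponent r x₀ := comp_eq_of_mem' hT hC hx₀C
  exact le_antisymm hsub (fun y hy => ⟨hB'a.1 hy, hCeq ▸ hB'comp hy⟩)

lemma maxAc_eq_inter (hT : IsTournament r) {S B : Set V}
    (hmeet : ∀ C, IsAcyclicComponent r C → (S ∩ C).Nonempty)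
    (hB : MaxAc r S B) : ∃ C, IsAcyclicComponent r C ∧ B = S ∩ C := by
  obtain ⟨x, hx⟩ := hB.2.2.1
  refine ⟨acyclicComponent r x, ⟨x, rfl⟩, ?_⟩
  have hsub : B ⊆ S ∩ acyclicComponent r x :=
    fun y hy => ⟨hB.1.1 hy, sub_comp hT hmeet hB.1 hB.2.1 x hx hy⟩
  exact hB.2.2.2 _ (maxAc_inter hT hmeet ⟨x, rfl⟩).1
    (maxAc_inter hT hmeet ⟨x, rfl⟩).2.1 hsub

lemma acAutonIn_image {S T B : Set V} (F : V → V)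
    (hFinj : Set.InjOn F S) (hFS : F '' S = T)
    (hrel : ∀ x ∈ S, ∀ y ∈ S, (r x y ↔ r (F x) (F y)))
    (hBa : AutonIn r S B) (hBc : AcyclicSet r B) :
    AutonIn r T (F '' B) ∧ AcyclicSet r (F '' B) := by
  have hBS : B ⊆ S := hBa.1
  constructor
  · constructor
    · rw [← hFS]; exact Set.image_mono hBS
    · rintro u ⟨x, hxB, rfl⟩ u' ⟨x', hx'B, rfl⟩ y ⟨hyT, hyFB⟩
      obtain ⟨w, hwS, rfl⟩ : ∃ w ∈ S, F w = y := by rwa [← hFS] at hyT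
      have hwB : w ∉ B := fun h => hyFB ⟨w, h, rfl⟩
      rw [← hrel x (hBS hxB) w hwS, ← hrel x' (hBS hx'B) w hwS]
      exact hBa.2 x hxB x' hx'B w ⟨hwS, hwB⟩
  · rintro ⟨u, ⟨a, haB, rfl⟩, v, ⟨b, hbB, rfl⟩, w, ⟨c, hcB, rfl⟩, h1, h2, h3⟩
    exact hBc ⟨a, haB, b, hbB, c, hcB,
      (hrel a (hBS haB) b (hBS hbB)).mpr h1,
      (hrel b (hBS hbB) c (hBS hcB)).mpr h2,
      (hrel c (hBS hcB) a (hBS haB)).mpr h3⟩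

lemma maxAc_image {S T B : Set V} (F G : V → V)
    (hGF : ∀ x ∈ S, G (F x) = x) (hFG : ∀ y ∈ T, F (G y) = y)
    (hFS : F '' S = T) (hGT : G '' T = S)
    (hrel : ∀ x ∈ S, ∀ y ∈ S, (r x y ↔ r (F x) (F y)))
    (hrelG : ∀ x ∈ T, ∀ y ∈ T, (r x y ↔ r (G x) (G y)))
    (hB : MaxAc r S B) : MaxAc r T (F '' B) := by
  have hFinj : Set.InjOn F S := fun a ha b hb h => by
    rw [← hGF a ha, ← hGF b hb, h]
  have hGinj : Set.InjOn G T := fun a ha b hb h => by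
    rw [← hFG a ha, ← hFG b hb, h]
  obtain ⟨himg1, himg2⟩ := acAutonIn_image F hFinj hFS hrel hB.1 hB.2.1
  refine ⟨himg1, himg2, hB.2.2.1.image F, ?_⟩
  intro B' hB'a hB'c hsub
  obtain ⟨himgG1, himgG2⟩ := acAutonIn_image G hGinj hGT hrelG hB'a hB'c
  have hBsub : B ⊆ G '' B' := by
    intro b hb
    exact ⟨F b, hsub ⟨b, hb, rfl⟩, hGF b (hB.1.1 hb)⟩
  have hBeq : B = G '' B' := hB.2.2.2 _ himgG1 himgG2 hBsub
  have : F '' (G '' B') = B' := by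
    rw [← Set.image_comp]
    apply Set.EqOn.image_eq_self
    intro y hy
    exact hFG y (hB'a.1 hy)
  rw [hBeq, this]

lemma multiset_invariant (hT : IsTournament r)
    (hfin : {A : Set V | IsAcyclicComponent r A}.Finite)
    {S T : Set V} (F G : V → V)
    (hGF : ∀ x ∈ S, G (F x) = x) (hFG : ∀ y ∈ T, F (G y) = y)
    (hFS : F '' S = T) (hGT : G '' T = S)
    (hrel : ∀ x ∈ S, ∀ y ∈ S, (r x y ↔ r (F x) (F y)))
    (hmeetS : ∀ C, IsAcyclicComponent r C → (S ∩ C).Nonempty)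
    (hmeetT : ∀ C, IsAcyclicComponent r C → (T ∩ C).Nonempty) :
    hfin.toFinset.val.map (fun C => (T ∩ C).ncard) =
      hfin.toFinset.val.map (fun C => (S ∩ C).ncard) := by
  classical
  have hFinj : Set.InjOn F S := fun a ha b hb h => by
    rw [← hGF a ha, ← hGF b hb, h]
  have hGinj : Set.InjOn G T := fun a ha b hb h => by
    rw [← hFG a ha, ← hFG b hb, h]
  have hrelG : ∀ x ∈ T, ∀ y ∈ T, (r x y ↔ r (G x) (G y)) := by
    intro x hx y hy
    obtain ⟨a, haS, rfl⟩ : ∃ a ∈ S, F a = x := by rwa [← hFS] at hx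
    obtain ⟨b, hbS, rfl⟩ : ∃ b ∈ S, F b = y := by rwa [← hFS] at hy
    rw [hGF a haS, hGF b hbS]
    exact (hrel a haS b hbS).symm
  set 𝒞 := hfin.toFinset with h𝒞
  have hmem : ∀ C, C ∈ 𝒞 ↔ IsAcyclicComponent r C := by
    intro C; rw [h𝒞, Set.Finite.mem_toFinset]; rfl
  have hg : ∀ C ∈ 𝒞, ∃ C', IsAcyclicComponent r C' ∧ F '' (S ∩ C) = T ∩ C' :=
    fun C hC => maxAc_eq_inter hT hmeetT
      (maxAc_image F G hGF hFG hFS hGT hrel hrelG (maxAc_inter hT hmeetS ((hmem C).mp hC)))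
  choose! g hg1 hg2 using hg
  have hgmem : ∀ C ∈ 𝒞, g C ∈ 𝒞 := fun C hC => (hmem _).mpr (hg1 C hC)
  have hginj : Set.InjOn g ↑𝒞 := by
    intro C₁ h₁ C₂ h₂ heq
    have e1 : F '' (S ∩ C₁) = F '' (S ∩ C₂) := by
      rw [hg2 C₁ h₁, hg2 C₂ h₂, heq]
    have e2 : S ∩ C₁ = S ∩ C₂ :=
      Set.InjOn.image_eq_image_iff hFinj Set.inter_subset_left Set.inter_subset_left |>.mp e1
    obtain ⟨x, hxS, hxC₁⟩ := hmeetS C₁ ((hmem C₁).mp h₁)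
    have hxC₂ : x ∈ C₂ := by
      have : x ∈ S ∩ C₂ := e2 ▸ Set.mem_inter hxS hxC₁
      exact this.2
    exact comp_disjoint hT ((hmem C₁).mp h₁) ((hmem C₂).mp h₂) hxC₁ hxC₂
  have himg : 𝒞.image g = 𝒞 := by
    apply Finset.eq_of_subset_of_card_le
    · intro C hC
      obtain ⟨C', hC', rfl⟩ := Finset.mem_image.mp hC
      exact hgmem C' hC'
    · rw [Finset.card_image_of_injOn hginj]
  calc 𝒞.val.map (fun C => (T ∩ C).ncard)
      = (𝒞.image g).val.map (fun C => (T ∩ C).ncard) := by rw [himg]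
    _ = (𝒞.val.map g).map (fun C => (T ∩ C).ncard) := by
        rw [Finset.image_val_of_injOn hginj]
    _ = 𝒞.val.map (fun C => (T ∩ g C).ncard) := by rw [Multiset.map_map]; rfl
    _ = 𝒞.val.map (fun C => (S ∩ C).ncard) := by
        apply Multiset.map_congr rfl
        intro C hC
        have hC' : C ∈ 𝒞 := hC
        rw [← hg2 C hC', Set.ncard_image_of_injOn (hFinj.mono Set.inter_subset_left)]

end Aux

namespace Aux
variable {V : Type u} {r : V → V → Prop}

lemma exists_assign {α : Type u} [DecidableEq α] (s : Finset α) :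
    ∀ ν : Multiset ℕ, ν.card = s.card →
    ∃ f : α → ℕ, s.val.map f = ν ∧ ∀ a ∉ s, f a = 0 := by
  induction s using Finset.induction_on with
  | empty =>
    intro ν hν
    refine ⟨fun _ => 0, ?_, fun _ _ => rfl⟩
    simp only [Finset.card_empty] at hν
    rw [Multiset.card_eq_zero.mp hν]
    rfl
  | @insert a s' ha ih =>
    intro ν hν
    rw [Finset.card_insert_of_notMem ha] at hν
    have hνne : ν ≠ 0 := by
      intro h; rw [h] at hν; simp at hν
    obtain ⟨b, hb⟩ := Multiset.exists_mem_of_ne_zero hνne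
    obtain ⟨f', hf1, hf2⟩ := ih (ν.erase b) (by
      rw [Multiset.card_erase_of_mem hb, hν]; rfl)
    refine ⟨Function.update f' a b, ?_, ?_⟩
    · rw [Finset.insert_val_of_notMem ha, Multiset.map_cons, Function.update_self]
      have : s'.val.map (Function.update f' a b) = s'.val.map f' := by
        apply Multiset.map_congr rfl
        intro x hx
        have hxa : x ≠ a := fun h => ha (h ▸ hx)
        exact Function.update_of_ne hxa _ _
      rw [this, hf1, Multiset.cons_erase hb]
    · intro x hx
      rw [Finset.mem_insert] at hx
      push_neg at hx
      rw [Function.update_of_ne hx.1]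
      exact hf2 x hx.2

lemma construct (hT : IsTournament r)
    (hfin : {A : Set V | IsAcyclicComponent r A}.Finite) {k m : ℕ}
    (hk : Nat.card {A : Set V // IsAcyclicComponent r A ∧ A.Infinite} = k)
    (π : Nat.Partition m) (hπ : π.parts.card ≤ k) :
    ∃ S : Finset V,
      S.card = m + hfin.toFinset.card ∧
      (∀ C, IsAcyclicComponent r C → ((↑S : Set V) ∩ C).Nonempty) ∧
      (hfin.toFinset.val.map (fun C => ((↑S : Set V) ∩ C).ncard - 1)).filter (· ≠ 0)
        = π.parts := by
  classical
  set 𝒞 := hfin.toFinset with h𝒞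
  have hmem : ∀ C, C ∈ 𝒞 ↔ IsAcyclicComponent r C := by
    intro C; rw [h𝒞, Set.Finite.mem_toFinset]; rfl
  set ℐ := 𝒞.filter (fun C => C.Infinite) with hℐ
  have hkℐ : ℐ.card = k := by
    rw [← hk]
    have hset : {A : Set V | IsAcyclicComponent r A ∧ A.Infinite} = ↑ℐ := by
      ext A
      simp only [hℐ, Finset.coe_filter, Set.mem_setOf_eq, hmem]
    have : Nat.card {A : Set V // IsAcyclicComponent r A ∧ A.Infinite}
        = Set.ncard {A : Set V | IsAcyclicComponent r A ∧ A.Infinite} :=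
      Nat.card_coe_set_eq _
    rw [this, hset, Set.ncard_coe_finset]
  set μ := π.parts + Multiset.replicate (k - π.parts.card) 0 with hμ
  have hμcard : μ.card = ℐ.card := by
    rw [hμ, Multiset.card_add, Multiset.card_replicate, hkℐ,
      Nat.add_sub_cancel' hπ]
  obtain ⟨f, hf1, hf2⟩ := exists_assign ℐ μ hμcard
  have hchoose : ∀ C ∈ 𝒞, ∃ t : Finset V, ↑t ⊆ C ∧ t.card = 1 + f C := by
    intro C hC
    have hCcomp := (hmem C).mp hC
    by_cases hCinf : C.Infinite
    · exact hCinf.exists_subset_card_eq (1 + f C)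
    · obtain ⟨z, rfl⟩ := hCcomp
      have hf0 : f (acyclicComponent r z) = 0 := by
        apply hf2
        rw [hℐ, Finset.mem_filter]
        exact fun h => hCinf h.2
      refine ⟨{z}, by simp [mem_comp_self hT z], by simp [hf0]⟩
  choose! sfun hs1 hs2 using hchoose
  set S := 𝒞.biUnion sfun with hS
  have hdisj : ∀ C₁ ∈ 𝒞, ∀ C₂ ∈ 𝒞, C₁ ≠ C₂ → Disjoint (sfun C₁) (sfun C₂) := by
    intro C₁ h₁ C₂ h₂ hne
    rw [Finset.disjoint_left]
    intro x hx1 hx2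
    exact hne (comp_disjoint hT ((hmem C₁).mp h₁) ((hmem C₂).mp h₂)
      (hs1 C₁ h₁ hx1) (hs1 C₂ h₂ hx2))
  have hSC : ∀ C ∈ 𝒞, ((↑S : Set V) ∩ C) = ↑(sfun C) := by
    intro C hC
    ext x
    constructor
    · rintro ⟨hxS, hxC⟩
      obtain ⟨C', hC', hx'⟩ := Finset.mem_biUnion.mp hxS
      have : C' = C := comp_disjoint hT ((hmem C').mp hC') ((hmem C).mp hC)
        (hs1 C' hC' hx') hxC
      rwa [this] at hx'
    · intro hx
      exact ⟨Finset.mem_coe.mpr (Finset.mem_biUnion.mpr ⟨C, hC, hx⟩), hs1 C hC hx⟩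
  have hsumf : ∑ C ∈ 𝒞, f C = m := by
    have h1 : ∑ C ∈ 𝒞, f C = ∑ C ∈ ℐ, f C := by
      symm
      apply Finset.sum_subset (Finset.filter_subset _ _)
      intro C _ hC
      exact hf2 C hC
    have h2 : ∑ C ∈ ℐ, f C = μ.sum := by
      rw [← hf1]
      rfl
    rw [h1, h2, hμ, Multiset.sum_add, Multiset.sum_replicate, smul_zero,
      add_zero, π.parts_sum]
  have hScard : S.card = m + 𝒞.card := by
    rw [hS, Finset.card_biUnion hdisj]
    have : ∀ C ∈ 𝒞, (sfun C).card = 1 + f C := hs2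
    rw [Finset.sum_congr rfl this, Finset.sum_add_distrib, Finset.sum_const,
      smul_eq_mul, mul_one, hsumf, Nat.add_comm]
  refine ⟨S, hScard, ?_, ?_⟩
  · intro C hC
    have hC𝒞 : C ∈ 𝒞 := (hmem C).mpr hC
    rw [hSC C hC𝒞]
    have : 0 < (sfun C).card := by rw [hs2 C hC𝒞]; omega
    obtain ⟨x, hx⟩ := Finset.card_pos.mp this
    exact ⟨x, hx⟩
  · have hmap : 𝒞.val.map (fun C => ((↑S : Set V) ∩ C).ncard - 1) = 𝒞.val.map f := by
      apply Multiset.map_congr rfl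
      intro C hC
      have hC𝒞 : C ∈ 𝒞 := hC
      rw [hSC C hC𝒞, Set.ncard_coe_finset, hs2 C hC𝒞]
      omega
    rw [hmap]
    have hsplit : 𝒞.val = ℐ.val + (𝒞.filter (fun C => ¬ C.Infinite)).val := by
      rw [hℐ]
      simp only [Finset.filter_val]
      rw [Multiset.filter_add_not]
    rw [hsplit, Multiset.map_add, Multiset.filter_add, hf1]
    have hz : ((𝒞.filter (fun C => ¬ C.Infinite)).val.map f).filter (· ≠ 0) = 0 := by
      rw [Multiset.filter_eq_nil]
      intro a ha
      obtain ⟨C, hC, rfl⟩ := Multiset.mem_map.mp ha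
      have hCmem := Finset.mem_filter.mp hC
      have : f C = 0 := by
        apply hf2
        rw [hℐ, Finset.mem_filter]
        exact fun h => hCmem.2 h.2
      simp [this]
    rw [hz, add_zero, hμ, Multiset.filter_add]
    have hp1 : π.parts.filter (· ≠ 0) = π.parts := by
      rw [Multiset.filter_eq_self]
      intro a ha
      exact (π.parts_pos ha).ne'
    have hp2 : (Multiset.replicate (k - π.parts.card) 0).filter (· ≠ 0) = 0 := by
      rw [Multiset.filter_eq_nil]
      intro a ha
      rw [Multiset.eq_of_mem_replicate ha]
      simp
    rw [hp1, hp2, add_zero]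

end Aux

namespace Aux
variable {V : Type u} {r : V → V → Prop}

lemma inducedIso_refl (s : Finset V) : InducedIso r s s :=
  ⟨Equiv.refl _, fun _ _ => Iff.rfl⟩

lemma inducedIso_symm {s t : Finset V} (h : InducedIso r s t) : InducedIso r t s := by
  obtain ⟨e, he⟩ := h
  refine ⟨e.symm, fun a b => ?_⟩
  have := he (e.symm a) (e.symm b)
  simpa using this.symm

lemma inducedIso_trans {s t u : Finset V} (h1 : InducedIso r s t)
    (h2 : InducedIso r t u) : InducedIso r s u := by
  obtain ⟨e, he⟩ := h1
  obtain ⟨f, hf⟩ := h2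
  exact ⟨e.trans f, fun a b => (he a b).trans (hf (e a) (e b))⟩

lemma inducedIso_equivalence (n : ℕ) :
    Equivalence (fun s t : {w : Finset V // w.card = n} => InducedIso r s.val t.val) :=
  ⟨fun s => inducedIso_refl s.val, inducedIso_symm, inducedIso_trans⟩

def relIso (n : ℕ) (R₁ R₂ : Fin n → Fin n → Prop) : Prop :=
  ∃ σ : Fin n ≃ Fin n, ∀ i j, R₁ i j ↔ R₂ (σ i) (σ j)

noncomputable def wEquiv {n : ℕ} (w : {w : Finset V // w.card = n}) :
    {x // x ∈ w.val} ≃ Fin n :=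
  Fintype.equivFinOfCardEq (by rw [Fintype.card_coe]; exact w.2)

noncomputable def qrel (r : V → V → Prop) {n : ℕ} (w : {w : Finset V // w.card = n}) :
    Fin n → Fin n → Prop :=
  fun i j => r ((wEquiv w).symm i).val ((wEquiv w).symm j).val

lemma qrel_iso {n : ℕ} {s t : {w : Finset V // w.card = n}}
    (h : InducedIso r s.val t.val) : relIso n (qrel r s) (qrel r t) := by
  obtain ⟨e, he⟩ := h
  refine ⟨((wEquiv s).symm.trans e).trans (wEquiv t), fun i j => ?_⟩
  unfold qrel
  simp only [Equiv.trans_apply, Equiv.symm_apply_apply]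
  exact he _ _

lemma qrel_iso_rev {n : ℕ} {s t : {w : Finset V // w.card = n}}
    (h : relIso n (qrel r s) (qrel r t)) : InducedIso r s.val t.val := by
  obtain ⟨σ, hσ⟩ := h
  refine ⟨((wEquiv s).trans σ).trans (wEquiv t).symm, fun a b => ?_⟩
  have := hσ (wEquiv s a) (wEquiv s b)
  unfold qrel at this
  rw [Equiv.symm_apply_apply, Equiv.symm_apply_apply] at this
  exact this

lemma relIso_equivalence (n : ℕ) : Equivalence (relIso n) := by
  constructor
  · exact fun R => ⟨Equiv.refl _, fun i j => Iff.rfl⟩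
  · rintro R₁ R₂ ⟨σ, hσ⟩
    refine ⟨σ.symm, fun i j => ?_⟩
    have := hσ (σ.symm i) (σ.symm j)
    simpa using this.symm
  · rintro R₁ R₂ R₃ ⟨σ, hσ⟩ ⟨τ, hτ⟩
    exact ⟨σ.trans τ, fun i j => (hσ i j).trans (hτ (σ i) (σ j))⟩

lemma profile_quot_finite (r : V → V → Prop) (n : ℕ) :
    Finite (Quot (fun s t : {w : Finset V // w.card = n} => InducedIso r s.val t.val)) := by
  set ρ := fun s t : {w : Finset V // w.card = n} => InducedIso r s.val t.val
  have hΦ : ∀ s t, ρ s t →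
      Quot.mk (relIso n) (qrel r s) = Quot.mk _ (qrel r t) :=
    fun s t h => Quot.sound (qrel_iso h)
  set Φ : Quot ρ → Quot (relIso n) :=
    Quot.lift (fun w => Quot.mk _ (qrel r w)) hΦ
  have hinj : Function.Injective Φ := by
    intro x y
    induction x using Quot.ind with | _ s =>
    induction y using Quot.ind with | _ t =>
    intro h
    have h2 : relIso n (qrel r s) (qrel r t) :=
      ((relIso_equivalence n).eqvGen_iff).mp (Quot.eqvGen_exact h)
    exact Quot.sound (qrel_iso_rev h2)
  have : Finite (Quot (relIso n)) := Quot.finite _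
  exact Finite.of_injective Φ hinj

end Aux

namespace Aux

lemma partition_count_lb {m k q : ℕ} (hk : 1 ≤ k) (hq : 1 ≤ q)
    (hm : ((k-1)*(k-1) + (k-1)) * q + 1 ≤ m) :
    q ^ (k - 1) ≤ Nat.card {π : Nat.Partition m // π.parts.card ≤ k} := by
  classical
  set j := k - 1 with hj
  have hjk : j + 1 = k := by omega
  -- the building blocks
  set c : (Fin j → Fin q) → Fin j → ℕ := fun a i => (a i : ℕ) + (i : ℕ) * q + 1 with hc
  have hcub : ∀ a i, c a i ≤ j * q := by
    intro a i
    have h1 : (a i : ℕ) < q := (a i).2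
    have h2 : (i : ℕ) < j := i.2
    have hj1 : 0 < j := lt_of_le_of_lt (Nat.zero_le _) i.2
    have h3 : (i : ℕ) * q ≤ (j - 1) * q := Nat.mul_le_mul_right q (by omega)
    have h4 : (j - 1) * q + q = j * q := by
      rw [Nat.sub_mul, Nat.one_mul, Nat.sub_add_cancel (Nat.le_mul_of_pos_left q hj1)]
    show (a i : ℕ) + (i : ℕ) * q + 1 ≤ j * q
    omega
  set Sm : (Fin j → Fin q) → ℕ := fun a => ∑ i, c a i with hSm
  have hSub : ∀ a, Sm a ≤ j * (j * q) := by
    intro a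
    calc Sm a ≤ ∑ _i : Fin j, j * q := Finset.sum_le_sum (fun i _ => hcub a i)
    _ = j * (j * q) := by rw [Finset.sum_const, Finset.card_univ, Fintype.card_fin, smul_eq_mul]
  have hbig : ∀ a, j * q + 1 ≤ m - Sm a := by
    intro a
    have h1 : Sm a ≤ j * (j * q) := hSub a
    have h2 : (j * j + j) * q + 1 ≤ m := hm
    have hd : (j * j + j) * q = j * (j * q) + j * q := by
      rw [Nat.add_mul, Nat.mul_assoc]
    omega
  set P : (Fin j → Fin q) → Nat.Partition m := fun a =>
    { parts := (Multiset.map (c a) Finset.univ.val) + {m - Sm a}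
      parts_pos := by
        intro x hx
        rw [Multiset.mem_add] at hx
        rcases hx with hx | hx
        · obtain ⟨i, _, rfl⟩ := Multiset.mem_map.mp hx
          simp [hc]
        · rw [Multiset.mem_singleton] at hx
          have := hbig a
          omega
      parts_sum := by
        rw [Multiset.sum_add, Multiset.sum_singleton]
        have h1 : (Multiset.map (c a) Finset.univ.val).sum = Sm a := rfl
        rw [h1]
        have h2 : Sm a ≤ m := by have := hbig a; omega
        omega } with hP
  have hPcard : ∀ a, (P a).parts.card ≤ k := by
    intro a
    show ((Multiset.map (c a) Finset.univ.val) + {m - Sm a}).card ≤ k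
    rw [Multiset.card_add, Multiset.card_map, Multiset.card_singleton]
    have : (Finset.univ : Finset (Fin j)).val.card = j := by
      rw [← Finset.card_def, Finset.card_univ, Fintype.card_fin]
    omega
  set Φ : (Fin j → Fin q) → {π : Nat.Partition m // π.parts.card ≤ k} :=
    fun a => ⟨P a, hPcard a⟩ with hΦ
  have hinj : Function.Injective Φ := by
    intro a a' h
    have hparts : (P a).parts = (P a').parts := congrArg (fun x => x.val.parts) h
    funext i
    have hmem : c a i ∈ (P a').parts := by
      rw [← hparts]
      exact Multiset.mem_add.mpr (Or.inl (Multiset.mem_map.mpr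
        ⟨i, Finset.mem_univ_val i, rfl⟩))
    rw [Multiset.mem_add] at hmem
    rcases hmem with hmem | hmem
    · obtain ⟨i', _, he⟩ := Multiset.mem_map.mp hmem
      -- he : c a' i' = c a i
      have hdiv : ∀ (b : Fin j → Fin q) (l : Fin j), (c b l - 1) / q = (l : ℕ) := by
        intro b l
        rw [hc]
        simp only [Nat.add_sub_cancel]
        rw [Nat.add_mul_div_right _ _ (by omega : 0 < q),
          Nat.div_eq_of_lt (b l).2, Nat.zero_add]
      have hmod : ∀ (b : Fin j → Fin q) (l : Fin j), (c b l - 1) % q = (b l : ℕ) := by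
        intro b l
        rw [hc]
        simp only [Nat.add_sub_cancel]
        rw [Nat.add_mul_mod_self_right, Nat.mod_eq_of_lt (b l).2]
      have hieq : (i' : ℕ) = (i : ℕ) := by
        rw [← hdiv a' i', ← hdiv a i, he]
      have hval : (a' i' : ℕ) = (a i : ℕ) := by
        rw [← hmod a' i', ← hmod a i, he]
      have hii : i' = i := Fin.ext hieq
      subst hii
      exact Fin.ext hval.symm
    · exfalso
      rw [Multiset.mem_singleton] at hmem
      have h1 := hcub a i
      have h2 := hbig a'
      omega
  have hfin : Finite {π : Nat.Partition m // π.parts.card ≤ k} := by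
    infer_instance
  calc q ^ j = Nat.card (Fin j → Fin q) := by
        rw [Nat.card_fun, Nat.card_eq_fintype_card, Nat.card_eq_fintype_card,
          Fintype.card_fin, Fintype.card_fin]
    _ ≤ Nat.card {π : Nat.Partition m // π.parts.card ≤ k} :=
        Nat.card_le_card_of_injective Φ hinj

end Aux

namespace Aux
variable {V : Type u} {r : V → V → Prop}

lemma exists_FG {S T : Finset V} (hiso : InducedIso r S T) :
    ∃ F G : V → V, (∀ x ∈ (↑S : Set V), G (F x) = x) ∧
      (∀ y ∈ (↑T : Set V), F (G y) = y) ∧ F '' ↑S = ↑T ∧ G '' ↑T = ↑S ∧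
      (∀ x ∈ (↑S : Set V), ∀ y ∈ (↑S : Set V), (r x y ↔ r (F x) (F y))) := by
  classical
  obtain ⟨e, he⟩ := hiso
  refine ⟨fun x => if h : x ∈ S then (e ⟨x, h⟩).val else x,
    fun y => if h : y ∈ T then (e.symm ⟨y, h⟩).val else y, ?_, ?_, ?_, ?_, ?_⟩
  · intro x hx
    have hx' : x ∈ S := hx
    simp only [dif_pos hx', dif_pos (e ⟨x, hx'⟩).2]
    show (e.symm ⟨(e ⟨x, hx'⟩).val, (e ⟨x, hx'⟩).2⟩).val = x
    have h2 : (⟨(e ⟨x, hx'⟩).val, (e ⟨x, hx'⟩).2⟩ : {y // y ∈ T}) = e ⟨x, hx'⟩ := rfl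
    rw [h2, Equiv.symm_apply_apply]
  · intro y hy
    have hy' : y ∈ T := hy
    simp only [dif_pos hy', dif_pos (e.symm ⟨y, hy'⟩).2]
    show (e ⟨(e.symm ⟨y, hy'⟩).val, (e.symm ⟨y, hy'⟩).2⟩).val = y
    have h2 : (⟨(e.symm ⟨y, hy'⟩).val, (e.symm ⟨y, hy'⟩).2⟩ : {x // x ∈ S})
        = e.symm ⟨y, hy'⟩ := rfl
    rw [h2, Equiv.apply_symm_apply]
  · apply Set.Subset.antisymm
    · rintro y ⟨x, hx, rfl⟩
      have hx' : x ∈ S := hx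
      simp only [dif_pos hx']
      exact (e ⟨x, hx'⟩).2
    · intro y hy
      have hy' : y ∈ T := hy
      refine ⟨(e.symm ⟨y, hy'⟩).val, (e.symm ⟨y, hy'⟩).2, ?_⟩
      simp only [dif_pos (e.symm ⟨y, hy'⟩).2]
      show (e ⟨(e.symm ⟨y, hy'⟩).val, (e.symm ⟨y, hy'⟩).2⟩).val = y
      have h2 : (⟨(e.symm ⟨y, hy'⟩).val, (e.symm ⟨y, hy'⟩).2⟩ : {x // x ∈ S})
          = e.symm ⟨y, hy'⟩ := rfl
      rw [h2, Equiv.apply_symm_apply]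
  · apply Set.Subset.antisymm
    · rintro x ⟨y, hy, rfl⟩
      have hy' : y ∈ T := hy
      simp only [dif_pos hy']
      exact (e.symm ⟨y, hy'⟩).2
    · intro x hx
      have hx' : x ∈ S := hx
      refine ⟨(e ⟨x, hx'⟩).val, (e ⟨x, hx'⟩).2, ?_⟩
      simp only [dif_pos (e ⟨x, hx'⟩).2]
      show (e.symm ⟨(e ⟨x, hx'⟩).val, (e ⟨x, hx'⟩).2⟩).val = x
      have h2 : (⟨(e ⟨x, hx'⟩).val, (e ⟨x, hx'⟩).2⟩ : {y // y ∈ T}) = e ⟨x, hx'⟩ := rfl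
      rw [h2, Equiv.symm_apply_apply]
  · intro x hx y hy
    have hx' : x ∈ S := hx
    have hy' : y ∈ S := hy
    simp only [dif_pos hx', dif_pos hy']
    exact he ⟨x, hx'⟩ ⟨y, hy'⟩
end Aux

open Filter in
/-- If a tournament `T` has exactly `p` acyclic components, of which
exactly `k` are infinite, then `φ_T(n) ≥ p_k(n−p)` for every `n ≥ p`, where `p_k(m)` is
the number of partitions of `m` into at most `k` parts. In particular the growth of
`φ_T` is at least that of a polynomial of degree `k−1`. -/
theorem profile_ge_partitions {V : Type u} (r : V → V → Prop) (hT : IsTournament r)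
    (p k : ℕ) (hfin : {A : Set V | IsAcyclicComponent r A}.Finite)
    (hp : Nat.card {A : Set V // IsAcyclicComponent r A} = p)
    (hk : Nat.card {A : Set V // IsAcyclicComponent r A ∧ A.Infinite} = k) :
    (∀ n : ℕ, p ≤ n →
      Nat.card {π : Nat.Partition (n - p) // π.parts.card ≤ k} ≤ profile r n) ∧
    (1 ≤ k →
      ∃ b : ℝ, 0 < b ∧ ∀ᶠ n : ℕ in atTop, b * (n : ℝ) ^ (k - 1) ≤ (profile r n : ℝ)) := by
  classical
  have hp𝒞 : hfin.toFinset.card = p := by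
    rw [← hp]
    have h1 : Nat.card {A : Set V // IsAcyclicComponent r A}
        = Set.ncard {A : Set V | IsAcyclicComponent r A} :=
      Nat.card_coe_set_eq _
    rw [h1, Set.ncard_eq_toFinset_card _ hfin]
  have main1 : ∀ n : ℕ, p ≤ n →
      Nat.card {π : Nat.Partition (n - p) // π.parts.card ≤ k} ≤ profile r n := by
    intro n hn
    set ρ := fun s t : {w : Finset V // w.card = n} => InducedIso r s.val t.val with hρ
    have hex : ∀ π : {π : Nat.Partition (n - p) // π.parts.card ≤ k},
        ∃ S : Finset V,
          S.card = (n - p) + hfin.toFinset.card ∧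
          (∀ C, IsAcyclicComponent r C → ((↑S : Set V) ∩ C).Nonempty) ∧
          (hfin.toFinset.val.map (fun C => ((↑S : Set V) ∩ C).ncard - 1)).filter (· ≠ 0)
            = π.1.parts :=
      fun π => Aux.construct hT hfin hk π.1 π.2
    choose Sf hS1 hS2 hS3 using hex
    have hScard : ∀ π, (Sf π).card = n := by
      intro π
      rw [hS1 π, hp𝒞, Nat.sub_add_cancel hn]
    set Ψ : {π : Nat.Partition (n - p) // π.parts.card ≤ k} → Quot ρ :=
      fun π => Quot.mk ρ ⟨Sf π, hScard π⟩ with hΨ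
    have hinj : Function.Injective Ψ := by
      intro π π' h
      have hiso : InducedIso r (Sf π) (Sf π') :=
        ((Aux.inducedIso_equivalence (r := r) n).eqvGen_iff).mp (Quot.eqvGen_exact h)
      obtain ⟨F, G, hGF, hFG, hFS, hGT, hrel⟩ := Aux.exists_FG hiso
      have hmeetS : ∀ C, IsAcyclicComponent r C → ((↑(Sf π) : Set V) ∩ C).Nonempty := hS2 π
      have hmeetT : ∀ C, IsAcyclicComponent r C → ((↑(Sf π') : Set V) ∩ C).Nonempty := hS2 π'
      have hmulti := Aux.multiset_invariant hT hfin F G hGF hFG hFS hGT hrel hmeetS hmeetT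
      have hparts : π.1.parts = π'.1.parts := by
        rw [← hS3 π, ← hS3 π']
        have hmm : ∀ (W : Finset V),
            hfin.toFinset.val.map (fun C => ((↑W : Set V) ∩ C).ncard - 1)
              = (hfin.toFinset.val.map (fun C => ((↑W : Set V) ∩ C).ncard)).map
                  (fun x => x - 1) := by
          intro W
          rw [Multiset.map_map]
          rfl
        rw [hmm, hmm, hmulti]
      exact Subtype.ext (Nat.Partition.ext hparts)
    have hfinQ : Finite (Quot ρ) := Aux.profile_quot_finite r n
    exact Nat.card_le_card_of_injective Ψ hinj
  refine ⟨main1, ?_⟩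
  intro hk1
  set j := k - 1 with hj
  set D := j * j + j + 1 with hD
  have hDpos : 0 < D := by omega
  refine ⟨(1 / (2 * D) : ℝ) ^ j, by positivity, ?_⟩
  rw [Filter.eventually_atTop]
  refine ⟨2 * (p + D), ?_⟩
  intro n hn
  have hpn : p ≤ n := by omega
  set m := n - p with hm
  set q := m / D with hq
  have hmD : D ≤ m := by omega
  have hq1 : 1 ≤ q := (Nat.one_le_div_iff hDpos).mpr hmD
  have hqD : D * q ≤ m := by
    rw [Nat.mul_comm]
    exact Nat.div_mul_le_self m D
  have hcond : (j * j + j) * q + 1 ≤ m := by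
    have hex : D * q = (j * j + j) * q + q := by
      rw [hD, Nat.add_mul, Nat.one_mul]
    omega
  have hcount : q ^ j ≤ Nat.card {π : Nat.Partition m // π.parts.card ≤ k} :=
    Aux.partition_count_lb hk1 hq1 hcond
  have hprof : Nat.card {π : Nat.Partition m // π.parts.card ≤ k} ≤ profile r n :=
    main1 n hpn
  -- real estimates
  have hnq : n ≤ 2 * (D * q) := by
    have hdm := Nat.div_add_mod m D
    rw [← hq] at hdm
    have hmod : m % D < D := Nat.mod_lt _ hDpos
    omega
  have hreal : ((1 / (2 * D) : ℝ)) * (n : ℝ) ≤ (q : ℝ) := by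
    rw [div_mul_eq_mul_div, one_mul, div_le_iff₀ (by positivity)]
    have h2 : (n : ℝ) ≤ 2 * ((D : ℝ) * q) := by exact_mod_cast hnq
    linarith
  calc (1 / (2 * (D : ℝ))) ^ j * (n : ℝ) ^ j
      = ((1 / (2 * D) : ℝ) * n) ^ j := by rw [mul_pow]
    _ ≤ (q : ℝ) ^ j := by
        apply pow_le_pow_left₀ (by positivity) hreal
    _ = ((q ^ j : ℕ) : ℝ) := by push_cast; ring
    _ ≤ ((Nat.card {π : Nat.Partition m // π.parts.card ≤ k} : ℕ) : ℝ) :=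
        Nat.cast_le.mpr hcount
    _ ≤ (profile r n : ℝ) := Nat.cast_le.mpr hprof
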